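/- For $t\in(-1,1)$ let $\rho=\rho(t)=\sqrt{1+t^2}$, $y(t)=(2-\rho)^{-2/3}(1+\rho)^{-1/3}$ and $x(t)=t\,y(t)$. Then for every $t\in(-1,1)$, $x'(t)\,y''(t)-y'(t)\,x''(t)=\rho^{-1}\,(2-\rho)^{-10/3}\,(1+\rho)^{-5/3}$. -/

import Mathlib

open Set

noncomputable def ρ (t : ℝ) : ℝ := Real.sqrt (1 + t ^ 2)

noncomputable def yfun (t : ℝ) : ℝ :=
  (2 - ρ t) ^ (-(2 : ℝ) / 3) * (1 + ρ t) ^ (-(1 : ℝ) / 3)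

noncomputable def xfun (t : ℝ) : ℝ := t * yfun t

noncomputable def y1 (t : ℝ) : ℝ := t * ((2 - ρ t) ^ (-(5:ℝ)/3) * (1 + ρ t) ^ (-(4:ℝ)/3))
noncomputable def x1 (t : ℝ) : ℝ := (2 - ρ t) ^ (-(5:ℝ)/3) * (1 + ρ t) ^ (-(1:ℝ)/3)
noncomputable def y2 (t : ℝ) : ℝ :=
  (ρ t)⁻¹ * (2*(ρ t)^3 - ρ t + 1) * ((2 - ρ t) ^ (-(8:ℝ)/3) * (1 + ρ t) ^ (-(7:ℝ)/3))
noncomputable def x2 (t : ℝ) : ℝ :=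
  (t / ρ t) * (1 + 2*ρ t) * ((2 - ρ t) ^ (-(8:ℝ)/3) * (1 + ρ t) ^ (-(4:ℝ)/3))

lemma rho_pos (t : ℝ) : 0 < ρ t := Real.sqrt_pos.2 (by positivity)

lemma rho_sq (t : ℝ) : ρ t ^ 2 = 1 + t ^ 2 := Real.sq_sqrt (by positivity)

lemma rho_lt_two {t : ℝ} (ht : t ∈ Ioo (-1:ℝ) 1) : ρ t < 2 := by
  have h1 := ht.1; have h2 := ht.2
  rw [ρ, show (2:ℝ) = Real.sqrt 4 by rw [show (4:ℝ) = 2^2 by norm_num, Real.sqrt_sq]; norm_num]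
  exact Real.sqrt_lt_sqrt (by positivity) (by nlinarith)

lemma hasDerivAt_rho (t : ℝ) : HasDerivAt ρ (t / ρ t) t := by
  have h1 : HasDerivAt (fun s : ℝ => 1 + s ^ 2) (2 * t) t := by
    simpa using ((hasDerivAt_pow 2 t).const_add 1)
  have h2 := (Real.hasDerivAt_sqrt (by positivity : (1:ℝ) + t^2 ≠ 0)).comp t h1
  have hr := (rho_pos t).ne'
  refine h2.congr_deriv ?_
  rw [ρ]; field_simp [show Real.sqrt (1+t^2) = ρ t from rfl]

lemma hasDerivAt_u (t : ℝ) (p : ℝ) (hu : (0:ℝ) < 2 - ρ t) :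
    HasDerivAt (fun s => (2 - ρ s) ^ p) (p * (2 - ρ t) ^ (p-1) * (-(t / ρ t))) t :=
  by have := (Real.hasDerivAt_rpow_const (p := p) (Or.inl hu.ne')).comp t ((hasDerivAt_rho t).const_sub 2); exact this

lemma hasDerivAt_v (t : ℝ) (p : ℝ) :
    HasDerivAt (fun s => (1 + ρ s) ^ p) (p * (1 + ρ t) ^ (p-1) * (t / ρ t)) t :=
  by have := (Real.hasDerivAt_rpow_const (p := p) (Or.inl (by have := rho_pos t; positivity : (0:ℝ) < 1 + ρ t).ne')).comp t ((hasDerivAt_rho t).const_add 1); exact this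

lemma hy1 {t : ℝ} (ht : t ∈ Ioo (-1:ℝ) 1) : HasDerivAt yfun (y1 t) t := by
  have hu : (0:ℝ) < 2 - ρ t := by have := rho_lt_two ht; linarith
  have h := (hasDerivAt_u t (-(2:ℝ)/3) hu).mul (hasDerivAt_v t (-(1:ℝ)/3))
  refine h.congr_deriv (Eq.symm ?_)
  have hr : ρ t ≠ 0 := (rho_pos t).ne'
  have hv : (0:ℝ) < 1 + ρ t := by have := rho_pos t; linarith
  rw [y1]
  rw [show (-(2:ℝ)/3 - 1) = -(5:ℝ)/3 by norm_num, show (-(1:ℝ)/3 - 1) = -(4:ℝ)/3 by norm_num]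
  rw [show ((2:ℝ) - ρ t) ^ (-(2:ℝ)/3) = (2 - ρ t) * (2 - ρ t) ^ (-(5:ℝ)/3) by
    rw [show (-(2:ℝ)/3) = -(5:ℝ)/3 + 1 by norm_num, Real.rpow_add hu, Real.rpow_one]; ring]
  rw [show ((1:ℝ) + ρ t) ^ (-(1:ℝ)/3) = (1 + ρ t) * (1 + ρ t) ^ (-(4:ℝ)/3) by
    rw [show (-(1:ℝ)/3) = -(4:ℝ)/3 + 1 by norm_num, Real.rpow_add hv, Real.rpow_one]; ring]
  field_simp
  ring

lemma hx1 {t : ℝ} (ht : t ∈ Ioo (-1:ℝ) 1) : HasDerivAt xfun (x1 t) t := by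
  have hu : (0:ℝ) < 2 - ρ t := by have := rho_lt_two ht; linarith
  have h := (hasDerivAt_id t).mul (hy1 ht)
  refine h.congr_deriv (Eq.symm ?_)
  have hr : ρ t ≠ 0 := (rho_pos t).ne'
  have hv : (0:ℝ) < 1 + ρ t := by have := rho_pos t; linarith
  simp only [id_eq]
  rw [x1, yfun, y1]
  rw [show ((2:ℝ) - ρ t) ^ (-(2:ℝ)/3) = (2 - ρ t) * (2 - ρ t) ^ (-(5:ℝ)/3) by
    rw [show (-(2:ℝ)/3) = -(5:ℝ)/3 + 1 by norm_num, Real.rpow_add hu, Real.rpow_one]; ring]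
  rw [show ((1:ℝ) + ρ t) ^ (-(1:ℝ)/3) = (1 + ρ t) * (1 + ρ t) ^ (-(4:ℝ)/3) by
    rw [show (-(1:ℝ)/3) = -(4:ℝ)/3 + 1 by norm_num, Real.rpow_add hv, Real.rpow_one]; ring]
  linear_combination ((2 - ρ t) ^ (-(5:ℝ)/3) * (1 + ρ t) ^ (-(4:ℝ)/3)) * rho_sq t

lemma hy2 {t : ℝ} (ht : t ∈ Ioo (-1:ℝ) 1) : HasDerivAt y1 (y2 t) t := by
  have hu : (0:ℝ) < 2 - ρ t := by have := rho_lt_two ht; linarith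
  have h := (hasDerivAt_id t).mul ((hasDerivAt_u t (-(5:ℝ)/3) hu).mul (hasDerivAt_v t (-(4:ℝ)/3)))
  refine h.congr_deriv (Eq.symm ?_)
  have hr : ρ t ≠ 0 := (rho_pos t).ne'
  have hv : (0:ℝ) < 1 + ρ t := by have := rho_pos t; linarith
  simp only [id_eq, Pi.mul_apply]
  rw [y2]
  rw [show (-(5:ℝ)/3 - 1) = -(8:ℝ)/3 by norm_num, show (-(4:ℝ)/3 - 1) = -(7:ℝ)/3 by norm_num]
  rw [show ((2:ℝ) - ρ t) ^ (-(5:ℝ)/3) = (2 - ρ t) * (2 - ρ t) ^ (-(8:ℝ)/3) by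
    rw [show (-(5:ℝ)/3) = -(8:ℝ)/3 + 1 by norm_num, Real.rpow_add hu, Real.rpow_one]; ring]
  rw [show ((1:ℝ) + ρ t) ^ (-(4:ℝ)/3) = (1 + ρ t) * (1 + ρ t) ^ (-(7:ℝ)/3) by
    rw [show (-(4:ℝ)/3) = -(7:ℝ)/3 + 1 by norm_num, Real.rpow_add hv, Real.rpow_one]; ring]
  field_simp
  linear_combination (3 * (3*ρ t - 1)) * rho_sq t

lemma hx2 {t : ℝ} (ht : t ∈ Ioo (-1:ℝ) 1) : HasDerivAt x1 (x2 t) t := by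
  have hu : (0:ℝ) < 2 - ρ t := by have := rho_lt_two ht; linarith
  have h := (hasDerivAt_u t (-(5:ℝ)/3) hu).mul (hasDerivAt_v t (-(1:ℝ)/3))
  refine h.congr_deriv (Eq.symm ?_)
  have hr : ρ t ≠ 0 := (rho_pos t).ne'
  have hv : (0:ℝ) < 1 + ρ t := by have := rho_pos t; linarith
  rw [x2]
  rw [show (-(5:ℝ)/3 - 1) = -(8:ℝ)/3 by norm_num, show (-(1:ℝ)/3 - 1) = -(4:ℝ)/3 by norm_num]
  rw [show ((2:ℝ) - ρ t) ^ (-(5:ℝ)/3) = (2 - ρ t) * (2 - ρ t) ^ (-(8:ℝ)/3) by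
    rw [show (-(5:ℝ)/3) = -(8:ℝ)/3 + 1 by norm_num, Real.rpow_add hu, Real.rpow_one]; ring]
  rw [show ((1:ℝ) + ρ t) ^ (-(1:ℝ)/3) = (1 + ρ t) * (1 + ρ t) ^ (-(4:ℝ)/3) by
    rw [show (-(1:ℝ)/3) = -(4:ℝ)/3 + 1 by norm_num, Real.rpow_add hv, Real.rpow_one]; ring]
  field_simp
  ring

/-- The curvature numerator `x'y'' - y'x''` of the boundary parametrization. -/
theorem curvature_numerator :
    ∀ t ∈ Ioo (-1 : ℝ) 1,
      deriv xfun t * deriv (deriv yfun) t - deriv yfun t * deriv (deriv xfun) t =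
        (ρ t)⁻¹ * (2 - ρ t) ^ (-(10 : ℝ) / 3) * (1 + ρ t) ^ (-(5 : ℝ) / 3) := by
  intro t ht
  have hmem : Ioo (-1:ℝ) 1 ∈ nhds t := isOpen_Ioo.mem_nhds ht
  have hdy : deriv (deriv yfun) t = y2 t := by
    have he : deriv yfun =ᶠ[nhds t] y1 :=
      Filter.eventuallyEq_of_mem hmem (fun s hs => (hy1 hs).deriv)
    rw [he.deriv_eq, (hy2 ht).deriv]
  have hdx : deriv (deriv xfun) t = x2 t := by
    have he : deriv xfun =ᶠ[nhds t] x1 :=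
      Filter.eventuallyEq_of_mem hmem (fun s hs => (hx1 hs).deriv)
    rw [he.deriv_eq, (hx2 ht).deriv]
  rw [hdy, hdx, (hy1 ht).deriv, (hx1 ht).deriv]
  have hu : (0:ℝ) < 2 - ρ t := by have := rho_lt_two ht; linarith
  have hr : ρ t ≠ 0 := (rho_pos t).ne'
  have hv : (0:ℝ) < 1 + ρ t := by have := rho_pos t; linarith
  rw [x1, x2, y1, y2]
  rw [show ((2:ℝ) - ρ t) ^ (-(10:ℝ)/3) = ((2 - ρ t) ^ (-(8:ℝ)/3))^2 * (2 - ρ t)^2 by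
    rw [← Real.rpow_natCast ((2 - ρ t) ^ (-(8:ℝ)/3)) 2, ← Real.rpow_natCast (2 - ρ t) 2,
      ← Real.rpow_mul hu.le, ← Real.rpow_add hu]; norm_num]
  rw [show ((1:ℝ) + ρ t) ^ (-(5:ℝ)/3) = ((1 + ρ t) ^ (-(7:ℝ)/3))^2 * (1 + ρ t)^3 by
    rw [← Real.rpow_natCast ((1 + ρ t) ^ (-(7:ℝ)/3)) 2, ← Real.rpow_natCast (1 + ρ t) 3,
      ← Real.rpow_mul hv.le, ← Real.rpow_add hv]; norm_num]
  rw [show ((2:ℝ) - ρ t) ^ (-(5:ℝ)/3) = (2 - ρ t) * (2 - ρ t) ^ (-(8:ℝ)/3) by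
    rw [show (-(5:ℝ)/3) = -(8:ℝ)/3 + 1 by norm_num, Real.rpow_add hu, Real.rpow_one]; ring]
  rw [show ((1:ℝ) + ρ t) ^ (-(1:ℝ)/3) = (1 + ρ t)^2 * (1 + ρ t) ^ (-(7:ℝ)/3) by
    rw [← Real.rpow_natCast (1 + ρ t) 2, ← Real.rpow_add hv]; norm_num]
  rw [show ((1:ℝ) + ρ t) ^ (-(4:ℝ)/3) = (1 + ρ t) * (1 + ρ t) ^ (-(7:ℝ)/3) by
    rw [show (-(4:ℝ)/3) = -(7:ℝ)/3 + 1 by norm_num, Real.rpow_add hv, Real.rpow_one]; ring]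
  field_simp
  linear_combination (2 * ρ t + 1) * rho_sq t
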